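/- Bound on the network disagreement term Ψ₂: Let X ⊆ ℝ^d be closed and convex, let ‖·‖ be a norm on ℝ^d with dual norm ‖·‖_*, let ψ : ℝ^d → ℝ be 1-strongly convex on X with respect to ‖·‖, and let α : ℕ → ℝ be positive. For t = 1,…,T and j = 1,…,n, let z_j(t), z̄(t) ∈ ℝ^d and let g_j(t) ∈ ℝ^d satisfy ‖g_j(t)‖_* ≤ L; let x_j(t) be a minimizer over X of x ↦ ⟨x, z_j(t)⟩ + ψ(x)/α(t−1) and y(t) a minimizer over X of x ↦ ⟨x, z̄(t)⟩ + ψ(x)/α(t−1). Then ∑_{t=1}^T ∑_{j=1}^n ⟨g_j(t), x_j(t) − y(t)⟩ ≤ L·∑_{t=1}^T ∑_{j=1}^n α(t−1)·‖z̄(t) − z_j(t)‖_*. -/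

import Mathlib

open Finset RealInnerProductSpace

/-- The dual norm `‖z‖_* = sup {⟨z, x⟩ : N x ≤ 1}` of a norm `N` on `ℝ^d`. -/
noncomputable def dualNorm {d : ℕ} (N : EuclideanSpace ℝ (Fin d) → ℝ)
    (z : EuclideanSpace ℝ (Fin d)) : ℝ :=
  sSup {r : ℝ | ∃ x : EuclideanSpace ℝ (Fin d), N x ≤ 1 ∧ r = ⟪z, x⟫}

/-- `N` is a norm on `ℝ^d` (triangle inequality, absolute homogeneity, definiteness). -/
def IsNorm {d : ℕ} (N : EuclideanSpace ℝ (Fin d) → ℝ) : Prop :=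
  (∀ x y, N (x + y) ≤ N x + N y) ∧ (∀ (c : ℝ) x, N (c • x) = |c| * N x) ∧
    (∀ x, N x = 0 ↔ x = 0)

/-- `ψ` is 1-strongly convex on `X` with respect to the norm `N`. -/
def StronglyConvexOnWith {d : ℕ} (X : Set (EuclideanSpace ℝ (Fin d)))
    (N : EuclideanSpace ℝ (Fin d) → ℝ) (ψ : EuclideanSpace ℝ (Fin d) → ℝ) : Prop :=
  ∀ ⦃x⦄, x ∈ X → ∀ ⦃y⦄, y ∈ X → ∀ ⦃θ : ℝ⦄, 0 ≤ θ → θ ≤ 1 →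
    ψ (θ • x + (1 - θ) • y) ≤ θ * ψ x + (1 - θ) * ψ y - θ * (1 - θ) / 2 * N (x - y) ^ 2

def NormCopy (d : ℕ) : Type := EuclideanSpace ℝ (Fin d)
instance (d : ℕ) : AddCommGroup (NormCopy d) :=
  inferInstanceAs (AddCommGroup (EuclideanSpace ℝ (Fin d)))
noncomputable instance (d : ℕ) : Module ℝ (NormCopy d) :=
  inferInstanceAs (Module ℝ (EuclideanSpace ℝ (Fin d)))
instance (d : ℕ) : FiniteDimensional ℝ (NormCopy d) :=
  inferInstanceAs (FiniteDimensional ℝ (EuclideanSpace ℝ (Fin d)))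

lemma IsNorm.map_zero {d : ℕ} {N : EuclideanSpace ℝ (Fin d) → ℝ} (hN : IsNorm N) : N 0 = 0 :=
  (hN.2.2 0).2 rfl

lemma IsNorm.nonneg {d : ℕ} {N : EuclideanSpace ℝ (Fin d) → ℝ} (hN : IsNorm N) (x) : 0 ≤ N x := by
  have h := hN.1 x (-x)
  have hneg : N (-x) = N x := by
    have := hN.2.1 (-1) x
    simpa using this
  rw [add_neg_cancel, hN.map_zero, hneg] at h
  linarith

lemma IsNorm.neg {d : ℕ} {N : EuclideanSpace ℝ (Fin d) → ℝ} (hN : IsNorm N) (x) :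
    N (-x) = N x := by simpa using hN.2.1 (-1) x

lemma IsNorm.exists_bound {d : ℕ} {N : EuclideanSpace ℝ (Fin d) → ℝ} (hN : IsNorm N) :
    ∃ C : ℝ, 0 ≤ C ∧ ∀ x : EuclideanSpace ℝ (Fin d), ‖x‖ ≤ C * N x := by
  letI : NormedAddCommGroup (NormCopy d) := AddGroupNorm.toNormedAddCommGroup
    { toFun := N
      map_zero' := hN.map_zero
      add_le' := hN.1
      neg' := hN.neg
      eq_zero_of_map_eq_zero' := fun x hx => (hN.2.2 x).1 hx }
  letI : NormedSpace ℝ (NormCopy d) :=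
    { norm_smul_le := fun c x => le_of_eq (by rw [Real.norm_eq_abs]; exact hN.2.1 c x) }
  let f : NormCopy d →ₗ[ℝ] EuclideanSpace ℝ (Fin d) :=
    { toFun := fun v => v, map_add' := fun _ _ => rfl, map_smul' := fun _ _ => rfl }
  let F := LinearMap.toContinuousLinearMap f
  refine ⟨‖F‖, norm_nonneg _, fun v => ?_⟩
  have := F.le_opNorm v
  exact this

lemma dualNorm_bddAbove {d : ℕ} {N : EuclideanSpace ℝ (Fin d) → ℝ} (hN : IsNorm N)
    (z : EuclideanSpace ℝ (Fin d)) :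
    BddAbove {r : ℝ | ∃ x : EuclideanSpace ℝ (Fin d), N x ≤ 1 ∧ r = ⟪z, x⟫} := by
  obtain ⟨C, hC0, hC⟩ := hN.exists_bound
  refine ⟨‖z‖ * C, fun r hr => ?_⟩
  obtain ⟨x, hx1, rfl⟩ := hr
  have h1 : ⟪z, x⟫ ≤ ‖z‖ * ‖x‖ := real_inner_le_norm z x
  have h2 := hC x
  calc ⟪z, x⟫ ≤ ‖z‖ * ‖x‖ := h1
  _ ≤ ‖z‖ * (C * N x) := mul_le_mul_of_nonneg_left h2 (norm_nonneg z)
  _ ≤ ‖z‖ * (C * 1) := by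
      apply mul_le_mul_of_nonneg_left _ (norm_nonneg z)
      exact mul_le_mul_of_nonneg_left hx1 hC0
  _ = ‖z‖ * C := by ring

lemma dualNorm_nonneg {d : ℕ} {N : EuclideanSpace ℝ (Fin d) → ℝ} (hN : IsNorm N)
    (z : EuclideanSpace ℝ (Fin d)) : 0 ≤ dualNorm N z :=
  le_csSup (dualNorm_bddAbove hN z) ⟨0, by simp [hN.map_zero]⟩

lemma inner_le_dualNorm {d : ℕ} {N : EuclideanSpace ℝ (Fin d) → ℝ} (hN : IsNorm N)
    (z v : EuclideanSpace ℝ (Fin d)) : ⟪z, v⟫ ≤ dualNorm N z * N v := by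
  rcases eq_or_ne v 0 with rfl | hv
  · simp [hN.map_zero]
  · have hNv : 0 < N v :=
      lt_of_le_of_ne (hN.nonneg v) (fun h => hv ((hN.2.2 v).1 h.symm))
    have hmem : ⟪z, (N v)⁻¹ • v⟫ ∈
        {r : ℝ | ∃ x : EuclideanSpace ℝ (Fin d), N x ≤ 1 ∧ r = ⟪z, x⟫} := by
      refine ⟨(N v)⁻¹ • v, le_of_eq ?_, rfl⟩
      rw [hN.2.1, abs_of_pos (inv_pos.2 hNv)]
      field_simp
    have h := le_csSup (dualNorm_bddAbove hN z) hmem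
    rw [real_inner_smul_right] at h
    calc ⟪z, v⟫ = ((N v)⁻¹ * ⟪z, v⟫) * N v := by field_simp
    _ ≤ dualNorm N z * N v := by
        apply mul_le_mul_of_nonneg_right h hNv.le

lemma growth_bound {d : ℕ} {X : Set (EuclideanSpace ℝ (Fin d))} (hXcv : Convex ℝ X)
    {N : EuclideanSpace ℝ (Fin d) → ℝ}
    {F : EuclideanSpace ℝ (Fin d) → ℝ} (hsc : StronglyConvexOnWith X N F)
    {x₀ : EuclideanSpace ℝ (Fin d)} (hx₀ : x₀ ∈ X) (hmin : ∀ v ∈ X, F x₀ ≤ F v)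
    {y : EuclideanSpace ℝ (Fin d)} (hy : y ∈ X) :
    F x₀ + N (y - x₀) ^ 2 / 2 ≤ F y := by
  have key : ∀ θ : ℝ, 0 < θ → θ ≤ 1 → (1 - θ) / 2 * N (y - x₀) ^ 2 ≤ F y - F x₀ := by
    intro θ hθ hθ1
    have hw : θ • y + (1 - θ) • x₀ ∈ X := hXcv hy hx₀ hθ.le (by linarith) (by ring)
    have h1 := hmin _ hw
    have h2 := hsc hy hx₀ hθ.le hθ1
    have h3 : θ * ((1 - θ) / 2 * N (y - x₀) ^ 2) ≤ θ * (F y - F x₀) := by linarith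
    exact le_of_mul_le_mul_left h3 hθ
  have hM0 : 0 ≤ N (y - x₀) ^ 2 := sq_nonneg _
  have main : N (y - x₀) ^ 2 / 2 ≤ F y - F x₀ := by
    refine le_of_forall_pos_le_add fun ε hε => ?_
    rcases le_or_gt (N (y - x₀) ^ 2) (2 * ε) with h | h
    · have h0 := key 1 one_pos le_rfl
      linarith
    · set M := N (y - x₀) ^ 2 with hM
      have hMpos : 0 < M := by linarith
      have hθ1 : 2 * ε / M ≤ 1 := by
        rw [div_le_one hMpos]; linarith
      have h0 := key (2 * ε / M) (div_pos (by linarith) hMpos) hθ1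
      have : (1 - 2 * ε / M) / 2 * M = M / 2 - ε := by field_simp
      linarith [this ▸ h0]
  linarith

lemma add_linear_strongly_convex {d : ℕ} {X : Set (EuclideanSpace ℝ (Fin d))}
    {N ψ : EuclideanSpace ℝ (Fin d) → ℝ} (hψ : StronglyConvexOnWith X N ψ)
    (w : EuclideanSpace ℝ (Fin d)) :
    StronglyConvexOnWith X N (fun v => ⟪v, w⟫ + ψ v) := by
  intro a ha b hb θ h0 h1
  have h := hψ ha hb h0 h1
  have hlin : ⟪θ • a + (1 - θ) • b, w⟫ = θ * ⟪a, w⟫ + (1 - θ) * ⟪b, w⟫ := by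
    simp [inner_add_left, real_inner_smul_left, Finset.mul_sum, mul_assoc]
  simp only [hlin]
  linarith

lemma pair_bound {d : ℕ} {X : Set (EuclideanSpace ℝ (Fin d))} (hXcv : Convex ℝ X)
    {N : EuclideanSpace ℝ (Fin d) → ℝ} (hN : IsNorm N)
    {ψ : EuclideanSpace ℝ (Fin d) → ℝ} (hψ : StronglyConvexOnWith X N ψ)
    {a : ℝ} (ha : 0 < a) {zx zy xx yy : EuclideanSpace ℝ (Fin d)}
    (hxX : xx ∈ X) (hyX : yy ∈ X)
    (hxmin : ∀ v ∈ X, ⟪xx, zx⟫ + ψ xx / a ≤ ⟪v, zx⟫ + ψ v / a)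
    (hymin : ∀ v ∈ X, ⟪yy, zy⟫ + ψ yy / a ≤ ⟪v, zy⟫ + ψ v / a) :
    N (xx - yy) ≤ a * dualNorm N (zy - zx) := by
  have e : ∀ (u : EuclideanSpace ℝ (Fin d)) (zz : EuclideanSpace ℝ (Fin d)),
      a * (⟪u, zz⟫ + ψ u / a) = ⟪u, a • zz⟫ + ψ u := by
    intro u zz; rw [real_inner_smul_right]; field_simp
  have hF1min : ∀ v ∈ X, ⟪xx, a • zx⟫ + ψ xx ≤ ⟪v, a • zx⟫ + ψ v := by
    intro v hv
    have := mul_le_mul_of_nonneg_left (hxmin v hv) ha.le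
    rwa [e, e] at this
  have hF2min : ∀ v ∈ X, ⟪yy, a • zy⟫ + ψ yy ≤ ⟪v, a • zy⟫ + ψ v := by
    intro v hv
    have := mul_le_mul_of_nonneg_left (hymin v hv) ha.le
    rwa [e, e] at this
  have g1 := growth_bound hXcv (add_linear_strongly_convex hψ (a • zx)) hxX hF1min hyX
  have g2 := growth_bound hXcv (add_linear_strongly_convex hψ (a • zy)) hyX hF2min hxX
  simp only [real_inner_smul_right] at g1 g2
  have hflip : N (yy - xx) = N (xx - yy) := by rw [← neg_sub xx yy, hN.neg]
  rw [hflip] at g1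
  have expand : ⟪zy - zx, xx - yy⟫ = ⟪xx, zy⟫ - ⟪yy, zy⟫ - ⟪xx, zx⟫ + ⟪yy, zx⟫ := by
    simp only [inner_sub_left, inner_sub_right]
    rw [real_inner_comm zy xx, real_inner_comm zy yy, real_inner_comm zx xx,
      real_inner_comm zx yy]
    ring
  have hkey : N (xx - yy) ^ 2 ≤ a * ⟪zy - zx, xx - yy⟫ := by
    rw [expand]; nlinarith [g1, g2]
  have hdual := inner_le_dualNorm hN (zy - zx) (xx - yy)
  rcases eq_or_lt_of_le (hN.nonneg (xx - yy)) with h0 | h0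
  · rw [← h0]
    exact mul_nonneg ha.le (dualNorm_nonneg hN _)
  · have h2 : N (xx - yy) * N (xx - yy) ≤ (a * dualNorm N (zy - zx)) * N (xx - yy) := by
      nlinarith
    exact le_of_mul_le_mul_right h2 h0

/-- **Bound on the network disagreement term Ψ₂:**
`∑_{t=1}^T ∑_{j=1}^n ⟨g_j(t), x_j(t) − y(t)⟩ ≤ L ∑_{t=1}^T ∑_{j=1}^n α(t−1) ‖z̄(t) − z_j(t)‖_*`. -/
theorem network_disagreement_bound {d n : ℕ}
    (X : Set (EuclideanSpace ℝ (Fin d))) (hXcl : IsClosed X) (hXcv : Convex ℝ X)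
    (N : EuclideanSpace ℝ (Fin d) → ℝ) (hN : IsNorm N)
    (ψ : EuclideanSpace ℝ (Fin d) → ℝ) (hψ : StronglyConvexOnWith X N ψ)
    (α : ℕ → ℝ) (hαpos : ∀ t, 0 < α t)
    (T : ℕ) (L : ℝ)
    (z : Fin n → ℕ → EuclideanSpace ℝ (Fin d))
    (zbar : ℕ → EuclideanSpace ℝ (Fin d))
    (g : Fin n → ℕ → EuclideanSpace ℝ (Fin d))
    (hgL : ∀ j t, t ∈ Icc 1 T → dualNorm N (g j t) ≤ L)
    (x : Fin n → ℕ → EuclideanSpace ℝ (Fin d))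
    (hxX : ∀ j t, t ∈ Icc 1 T → x j t ∈ X)
    (hxmin : ∀ j t, t ∈ Icc 1 T → ∀ v ∈ X,
      ⟪x j t, z j t⟫ + ψ (x j t) / α (t - 1) ≤ ⟪v, z j t⟫ + ψ v / α (t - 1))
    (y : ℕ → EuclideanSpace ℝ (Fin d))
    (hyX : ∀ t, t ∈ Icc 1 T → y t ∈ X)
    (hymin : ∀ t, t ∈ Icc 1 T → ∀ v ∈ X,
      ⟪y t, zbar t⟫ + ψ (y t) / α (t - 1) ≤ ⟪v, zbar t⟫ + ψ v / α (t - 1)) :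
    ∑ t ∈ Icc 1 T, ∑ j, ⟪g j t, x j t - y t⟫ ≤
      L * ∑ t ∈ Icc 1 T, ∑ j, α (t - 1) * dualNorm N (zbar t - z j t) := by
  have step1 : ∑ t ∈ Icc 1 T, ∑ j, ⟪g j t, x j t - y t⟫ ≤
      ∑ t ∈ Icc 1 T, ∑ j, L * (α (t - 1) * dualNorm N (zbar t - z j t)) := by
    refine Finset.sum_le_sum fun t ht => Finset.sum_le_sum fun j _ => ?_
    have hpair := pair_bound hXcv hN hψ (hαpos (t - 1)) (hxX j t ht) (hyX t ht)
      (hxmin j t ht) (hymin t ht)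
    have h1 := inner_le_dualNorm hN (g j t) (x j t - y t)
    have hL := hgL j t ht
    have hL0 : 0 ≤ L := le_trans (dualNorm_nonneg hN _) hL
    calc ⟪g j t, x j t - y t⟫ ≤ dualNorm N (g j t) * N (x j t - y t) := h1
    _ ≤ L * N (x j t - y t) := mul_le_mul_of_nonneg_right hL (hN.nonneg _)
    _ ≤ L * (α (t - 1) * dualNorm N (zbar t - z j t)) :=
        mul_le_mul_of_nonneg_left hpair hL0
  refine step1.trans (le_of_eq ?_)
  rw [Finset.mul_sum]
  exact Finset.sum_congr rfl fun t _ => (Finset.mul_sum _ _ _).symm
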